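/- Let f, g ∈ L¹(ℝ, ℂ) and let h, h' : ℝ → ℂ be almost periodic functions. If (f̂(y) + h(y)) · (ĝ(y) + h'(y)) = 1 for all y ∈ ℝ, where f̂(y) = ∫_ℝ e^{−iyt} f(t) dt and similarly for ĝ, then h(y) · h'(y) = 1 for all y ∈ ℝ. (That is, if an element of the algebra 𝒜 is invertible, then its almost periodic part is invertible among almost periodic functions.) -/

import Mathlib

open MeasureTheory Filter

lemma norm_exp_I_mul (l y : ℝ) : ‖Complex.exp (Complex.I * l * y)‖ = 1 := by
  have h1 : Complex.I * (l : ℂ) * (y : ℂ) = ((l * y : ℝ) : ℂ) * Complex.I := by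
    push_cast; ring
  rw [h1, Complex.norm_exp_ofReal_mul_I]

lemma recur_exp (s : Finset ℝ) (ε : ℝ) (hε : 0 < ε) (T : ℝ) :
    ∃ y : ℝ, T ≤ y ∧ ∀ l ∈ s, ‖Complex.exp (Complex.I * l * y) - 1‖ < ε := by
  classical
  set u : ℕ → (s → ℂ) := fun n l => Complex.exp (Complex.I * (l : ℝ) * ((n : ℕ) : ℝ)) with hu
  have hmem : ∀ n, u n ∈ Metric.closedBall (0 : s → ℂ) 1 := by
    intro n
    rw [Metric.mem_closedBall, dist_zero_right]
    refine pi_norm_le_iff_of_nonneg zero_le_one |>.2 fun l => ?_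
    exact le_of_eq (norm_exp_I_mul _ _)
  obtain ⟨x, -, φ, hφ, hconv⟩ :=
    (isCompact_closedBall (0 : s → ℂ) 1).tendsto_subseq hmem
  have hcauchy := hconv.cauchySeq
  rw [Metric.cauchySeq_iff] at hcauchy
  obtain ⟨N, hN⟩ := hcauchy ε hε
  set j : ℕ := max N (φ N + ⌈T⌉₊ + 1) with hj
  have hjN : N ≤ j := le_max_left _ _
  have hab : φ N + ⌈T⌉₊ + 1 ≤ φ j := le_trans (le_max_right _ _) (hφ.le_apply)
  set a := φ j with ha
  set b := φ N with hb
  have hba : b ≤ a := by omega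
  refine ⟨((a - b : ℕ) : ℝ), ?_, ?_⟩
  · have h2 : (⌈T⌉₊ : ℝ) ≤ ((a - b : ℕ) : ℝ) := by
      have : ⌈T⌉₊ ≤ a - b := by omega
      exact_mod_cast this
    exact le_trans (Nat.le_ceil T) h2
  · intro l hl
    have hd : dist ((u ∘ φ) j) ((u ∘ φ) N) < ε := hN j hjN N le_rfl
    have hdl : dist (u a ⟨l, hl⟩) (u b ⟨l, hl⟩) < ε :=
      lt_of_le_of_lt (dist_le_pi_dist (u a) (u b) ⟨l, hl⟩) hd
    have hnz : Complex.exp (Complex.I * l * ((b : ℕ) : ℝ)) ≠ 0 := Complex.exp_ne_zero _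
    have hsum : Complex.exp (Complex.I * l * ((b : ℕ) : ℝ)) *
        Complex.exp (Complex.I * l * ((a - b : ℕ) : ℝ)) =
        Complex.exp (Complex.I * l * ((a : ℕ) : ℝ)) := by
      rw [← Complex.exp_add]
      congr 1
      push_cast [Nat.cast_sub hba]
      ring
    have key : Complex.exp (Complex.I * l * ((a - b : ℕ) : ℝ)) - 1 =
        (Complex.exp (Complex.I * l * ((b : ℕ) : ℝ)))⁻¹ *
          (Complex.exp (Complex.I * l * ((a : ℕ) : ℝ)) -
            Complex.exp (Complex.I * l * ((b : ℕ) : ℝ))) := by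
      rw [inv_mul_eq_div, eq_div_iff hnz]
      linear_combination hsum
    rw [key, norm_mul, norm_inv, norm_exp_I_mul, inv_one, one_mul]
    have hd2 : dist (u a ⟨l, hl⟩) (u b ⟨l, hl⟩) =
        ‖Complex.exp (Complex.I * l * ((a : ℕ) : ℝ)) -
          Complex.exp (Complex.I * l * ((b : ℕ) : ℝ))‖ := by
      simp [hu, dist_eq_norm]
    rw [← hd2]
    exact hdl

/-- The set of almost periodic functions: the closure, in the Banach space of
bounded continuous functions `ℝ → ℂ` with the sup norm, of the linear span of
the functions `y ↦ exp (I * λ * y)`, `λ ∈ ℝ`. -/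
def AlmostPeriodic : Set (BoundedContinuousFunction ℝ ℂ) :=
  closure (Submodule.span ℂ
    {g : BoundedContinuousFunction ℝ ℂ |
      ∃ lam : ℝ, ∀ y : ℝ, g y = Complex.exp (Complex.I * lam * y)} : Set (BoundedContinuousFunction ℝ ℂ))

lemma ap_approx (f : BoundedContinuousFunction ℝ ℂ) (hf : f ∈ AlmostPeriodic)
    (ε : ℝ) (hε : 0 < ε) :
    ∃ (n : ℕ) (c : Fin n → ℂ) (lam : Fin n → ℝ),
      ∀ y : ℝ, ‖f y - ∑ i, c i * Complex.exp (Complex.I * lam i * y)‖ < ε := by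
  obtain ⟨p, hp, hdist⟩ := Metric.mem_closure_iff.1 hf ε hε
  rw [SetLike.mem_coe, Submodule.mem_span_set'] at hp
  obtain ⟨n, c, gg, hsum⟩ := hp
  have hg : ∀ i, ∃ lam : ℝ, ∀ y : ℝ,
      (gg i : BoundedContinuousFunction ℝ ℂ) y = Complex.exp (Complex.I * lam * y) :=
    fun i => (gg i).2
  choose lam hlam using hg
  refine ⟨n, c, lam, fun y => ?_⟩
  have hpy : p y = ∑ i, c i * Complex.exp (Complex.I * lam i * y) := by
    rw [← hsum]
    simp only [BoundedContinuousFunction.coe_sum, Finset.sum_apply,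
      BoundedContinuousFunction.coe_smul, Pi.smul_apply, smul_eq_mul]
    exact Finset.sum_congr rfl fun i _ => by rw [hlam i y]
  rw [← hpy]
  calc ‖f y - p y‖ = dist (f y) (p y) := by rw [dist_eq_norm]
    _ ≤ dist f p := BoundedContinuousFunction.dist_coe_le_dist y
    _ < ε := hdist

lemma poly_diff_bound (n : ℕ) (c : Fin n → ℂ) (lam : Fin n → ℝ) (y₀ y ε' : ℝ)
    (hy : ∀ i, ‖Complex.exp (Complex.I * lam i * y) - 1‖ ≤ ε') (hε' : 0 ≤ ε') :
    ‖(∑ i, c i * Complex.exp (Complex.I * lam i * (y₀ + y))) -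
      ∑ i, c i * Complex.exp (Complex.I * lam i * y₀)‖ ≤ (∑ i, ‖c i‖) * ε' := by
  have hterm : ∀ i : Fin n,
      c i * Complex.exp (Complex.I * lam i * (y₀ + y)) -
        c i * Complex.exp (Complex.I * lam i * y₀) =
      c i * Complex.exp (Complex.I * lam i * y₀) *
        (Complex.exp (Complex.I * lam i * y) - 1) := by
    intro i
    have : Complex.exp (Complex.I * lam i * (y₀ + y)) =
        Complex.exp (Complex.I * lam i * y₀) * Complex.exp (Complex.I * lam i * y) := by
      rw [← Complex.exp_add]; congr 1; push_cast; ring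
    rw [this]; ring
  rw [← Finset.sum_sub_distrib]
  calc ‖∑ i, (c i * Complex.exp (Complex.I * lam i * (y₀ + y)) -
        c i * Complex.exp (Complex.I * lam i * y₀))‖
      ≤ ∑ i, ‖c i * Complex.exp (Complex.I * lam i * (y₀ + y)) -
        c i * Complex.exp (Complex.I * lam i * y₀)‖ := norm_sum_le _ _
    _ ≤ ∑ i, ‖c i‖ * ε' := by
        refine Finset.sum_le_sum fun i _ => ?_
        rw [hterm i, norm_mul, norm_mul, norm_exp_I_mul, mul_one]
        exact mul_le_mul_of_nonneg_left (hy i) (norm_nonneg _)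
    _ = (∑ i, ‖c i‖) * ε' := by rw [Finset.sum_mul]

lemma ap_pair_recur (f f' : BoundedContinuousFunction ℝ ℂ) (hf : f ∈ AlmostPeriodic)
    (hf' : f' ∈ AlmostPeriodic) (y₀ ε T : ℝ) (hε : 0 < ε) :
    ∃ y : ℝ, T ≤ y ∧ ‖f (y₀ + y) - f y₀‖ < ε ∧ ‖f' (y₀ + y) - f' y₀‖ < ε := by
  obtain ⟨n, c, lam, hP⟩ := ap_approx f hf (ε / 3) (by linarith)
  obtain ⟨n', c', lam', hP'⟩ := ap_approx f' hf' (ε / 3) (by linarith)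
  set C : ℝ := (∑ i, ‖c i‖) + (∑ i, ‖c' i‖) + 1 with hC
  have hC1 : 1 ≤ C := by
    have := Finset.sum_nonneg (fun i (_ : i ∈ Finset.univ) => norm_nonneg (c i))
    have := Finset.sum_nonneg (fun i (_ : i ∈ Finset.univ) => norm_nonneg (c' i))
    simp only [hC]; linarith
  have hCpos : 0 < C := by linarith
  set ε' : ℝ := ε / (3 * C) with hε'
  have hε'pos : 0 < ε' := by positivity
  set s : Finset ℝ := (Finset.univ.image lam) ∪ (Finset.univ.image lam') with hs
  obtain ⟨y, hyT, hy⟩ := recur_exp s ε' hε'pos T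
  have hrec : ∀ i, ‖Complex.exp (Complex.I * lam i * y) - 1‖ ≤ ε' := fun i =>
    le_of_lt (hy (lam i) (Finset.mem_union_left _ (Finset.mem_image_of_mem lam (Finset.mem_univ i))))
  have hrec' : ∀ i, ‖Complex.exp (Complex.I * lam' i * y) - 1‖ ≤ ε' := fun i =>
    le_of_lt (hy (lam' i) (Finset.mem_union_right _ (Finset.mem_image_of_mem lam' (Finset.mem_univ i))))
  have hb : (∑ i, ‖c i‖) * ε' < ε / 3 := by
    have h1 : (∑ i, ‖c i‖) < C := by
      have := Finset.sum_nonneg (fun i (_ : i ∈ Finset.univ) => norm_nonneg (c' i))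
      simp only [hC]; linarith
    have h2 : C * ε' = ε / 3 := by
      rw [hε']; field_simp
    calc (∑ i, ‖c i‖) * ε' < C * ε' := by
          exact mul_lt_mul_of_pos_right h1 hε'pos
      _ = ε / 3 := h2
  have hb' : (∑ i, ‖c' i‖) * ε' < ε / 3 := by
    have h1 : (∑ i, ‖c' i‖) < C := by
      have := Finset.sum_nonneg (fun i (_ : i ∈ Finset.univ) => norm_nonneg (c i))
      simp only [hC]; linarith
    have h2 : C * ε' = ε / 3 := by
      rw [hε']; field_simp
    calc (∑ i, ‖c' i‖) * ε' < C * ε' := mul_lt_mul_of_pos_right h1 hε'pos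
      _ = ε / 3 := h2
  refine ⟨y, hyT, ?_, ?_⟩
  · have t1 : ‖f (y₀ + y) - ∑ i, c i * Complex.exp (Complex.I * lam i * (y₀ + y))‖ < ε / 3 :=
      by have := hP (y₀ + y); push_cast at this ⊢; exact this
    have t2 := poly_diff_bound n c lam y₀ y ε' hrec (le_of_lt hε'pos)
    have t3 : ‖(∑ i, c i * Complex.exp (Complex.I * lam i * y₀)) - f y₀‖ < ε / 3 := by
      rw [norm_sub_rev]; exact hP y₀
    have tri1 := norm_sub_le_norm_sub_add_norm_sub (f (y₀ + y))
      (∑ i, c i * Complex.exp (Complex.I * lam i * (y₀ + y))) (f y₀)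
    have tri2 := norm_sub_le_norm_sub_add_norm_sub
      (∑ i, c i * Complex.exp (Complex.I * lam i * (y₀ + y)))
      (∑ i, c i * Complex.exp (Complex.I * lam i * y₀)) (f y₀)
    linarith
  · have t1 : ‖f' (y₀ + y) - ∑ i, c' i * Complex.exp (Complex.I * lam' i * (y₀ + y))‖ < ε / 3 :=
      by have := hP' (y₀ + y); push_cast at this ⊢; exact this
    have t2 := poly_diff_bound n' c' lam' y₀ y ε' hrec' (le_of_lt hε'pos)
    have t3 : ‖(∑ i, c' i * Complex.exp (Complex.I * lam' i * y₀)) - f' y₀‖ < ε / 3 := by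
      rw [norm_sub_rev]; exact hP' y₀
    have tri1 := norm_sub_le_norm_sub_add_norm_sub (f' (y₀ + y))
      (∑ i, c' i * Complex.exp (Complex.I * lam' i * (y₀ + y))) (f' y₀)
    have tri2 := norm_sub_le_norm_sub_add_norm_sub
      (∑ i, c' i * Complex.exp (Complex.I * lam' i * (y₀ + y)))
      (∑ i, c' i * Complex.exp (Complex.I * lam' i * y₀)) (f' y₀)
    linarith

lemma RLatTop (f : ℝ → ℂ) :
    Tendsto (fun y : ℝ => ∫ t : ℝ, Complex.exp (-(Complex.I * y * t)) * f t)
      atTop (nhds 0) := by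
  have h1 := Real.tendsto_integral_exp_smul_cocompact (E := ℂ) f
  have h2 : Tendsto (fun y : ℝ => y / (2 * Real.pi)) atTop (cocompact ℝ) := by
    rw [cocompact_eq_atBot_atTop]
    refine Tendsto.mono_right ?_ le_sup_right
    exact Tendsto.atTop_div_const (by positivity) tendsto_id
  have h3 := h1.comp h2
  have heq : (fun y : ℝ => ∫ t : ℝ, Complex.exp (-(Complex.I * y * t)) * f t) =
      (fun w : ℝ => ∫ v : ℝ, (Real.fourierChar (-(v * w)) : Circle) • f v) ∘
        (fun y : ℝ => y / (2 * Real.pi)) := by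
    funext y
    simp only [Function.comp_apply]
    refine integral_congr_ae (Filter.Eventually.of_forall fun t => ?_)
    show Complex.exp (-(Complex.I * y * t)) * f t =
      (Real.fourierChar (-(t * (y / (2 * Real.pi)))) : Circle) • f t
    rw [Circle.smul_def, Real.fourierChar_apply]
    congr 2
    have hπc : (Real.pi : ℂ) ≠ 0 := by exact_mod_cast Real.pi_ne_zero
    push_cast
    field_simp
  rw [heq]
  exact h3

theorem stmt_3 (f g : ℝ → ℂ)
    (hf : Integrable f (volume : Measure ℝ)) (hg : Integrable g (volume : Measure ℝ))
    (h h' : BoundedContinuousFunction ℝ ℂ)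
    (hh : h ∈ AlmostPeriodic) (hh' : h' ∈ AlmostPeriodic)
    (hinv : ∀ y : ℝ,
      ((∫ t : ℝ, Complex.exp (-(Complex.I * y * t)) * f t) + h y) *
        ((∫ t : ℝ, Complex.exp (-(Complex.I * y * t)) * g t) + h' y) = 1) :
    ∀ y : ℝ, h y * h' y = 1 := by
  intro y₀
  set F : ℝ → ℂ := fun y => ∫ t : ℝ, Complex.exp (-(Complex.I * y * t)) * f t with hFdef
  set G : ℝ → ℂ := fun y => ∫ t : ℝ, Complex.exp (-(Complex.I * y * t)) * g t with hGdef
  have hFt : Tendsto F atTop (nhds 0) := RLatTop f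
  have hGt : Tendsto G atTop (nhds 0) := RLatTop g
  set M : ℝ := ‖h‖ + ‖h'‖ + 1 with hM
  have hM1 : 1 ≤ M := by
    have := norm_nonneg h; have := norm_nonneg h'; simp only [hM]; linarith
  have hMpos : 0 < M := by linarith
  have hhM : ∀ y : ℝ, ‖h y‖ ≤ M := fun y => by
    have h1 := BoundedContinuousFunction.norm_coe_le_norm h y
    have h2 := norm_nonneg h'
    simp only [hM]; linarith
  have hh'M : ∀ y : ℝ, ‖h' y‖ ≤ M := fun y => by
    have h1 := BoundedContinuousFunction.norm_coe_le_norm h' y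
    have h2 := norm_nonneg h
    simp only [hM]; linarith
  have key : ∀ ε : ℝ, 0 < ε → ‖h y₀ * h' y₀ - 1‖ < ε := by
    intro ε hε
    set δ : ℝ := min 1 (ε / (8 * M)) with hδ
    have hδpos : 0 < δ := lt_min one_pos (by positivity)
    have hδ1 : δ ≤ 1 := min_le_left _ _
    have hδ2 : δ ≤ ε / (8 * M) := min_le_right _ _
    clear_value δ
    have hFev : ∀ᶠ Y in atTop, ‖F Y‖ < δ ∧ ‖G Y‖ < δ := by
      have h1 := hFt.eventually (Metric.ball_mem_nhds (0 : ℂ) hδpos)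
      have h2 := hGt.eventually (Metric.ball_mem_nhds (0 : ℂ) hδpos)
      filter_upwards [h1, h2] with Y hY1 hY2
      constructor
      · simpa [dist_zero_right] using hY1
      · simpa [dist_zero_right] using hY2
    rw [eventually_atTop] at hFev
    obtain ⟨T₀, hT₀⟩ := hFev
    have hεM : 0 < ε / (8 * M) := by positivity
    obtain ⟨y, hyT, hr1, hr2⟩ := ap_pair_recur h h' hh hh' y₀ (ε / (8 * M)) (T₀ - y₀) hεM
    set Y : ℝ := y₀ + y with hYdef
    have hYT : T₀ ≤ Y := by simp only [hYdef]; linarith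
    obtain ⟨hFY, hGY⟩ := hT₀ Y hYT
    have hinvY : (F Y + h Y) * (G Y + h' Y) = 1 := hinv Y
    have hid : h Y * h' Y - 1 = -(F Y * G Y + F Y * h' Y + G Y * h Y) := by
      linear_combination hinvY
    have a1 : ‖h' y₀ - h' Y‖ ≤ ε / (8 * M) := by rw [norm_sub_rev]; exact le_of_lt hr2
    have a2 : ‖h y₀ - h Y‖ ≤ ε / (8 * M) := by rw [norm_sub_rev]; exact le_of_lt hr1
    have e1 : ‖h y₀ * h' y₀ - h Y * h' Y‖ ≤ M * (ε / (8 * M)) + ε / (8 * M) * M := by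
      have hsplit : h y₀ * h' y₀ - h Y * h' Y =
          h y₀ * (h' y₀ - h' Y) + (h y₀ - h Y) * h' Y := by ring
      rw [hsplit]
      calc ‖h y₀ * (h' y₀ - h' Y) + (h y₀ - h Y) * h' Y‖
          ≤ ‖h y₀ * (h' y₀ - h' Y)‖ + ‖(h y₀ - h Y) * h' Y‖ := norm_add_le _ _
        _ = ‖h y₀‖ * ‖h' y₀ - h' Y‖ + ‖h y₀ - h Y‖ * ‖h' Y‖ := by rw [norm_mul, norm_mul]
        _ ≤ M * (ε / (8 * M)) + ε / (8 * M) * M :=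
            add_le_add (mul_le_mul (hhM y₀) a1 (norm_nonneg _) hMpos.le)
              (mul_le_mul a2 (hh'M Y) (norm_nonneg _) (by positivity))
    have e2 : ‖h Y * h' Y - 1‖ ≤ δ * δ + δ * M + δ * M := by
      rw [hid, norm_neg]
      calc ‖F Y * G Y + F Y * h' Y + G Y * h Y‖
          ≤ ‖F Y * G Y‖ + ‖F Y * h' Y‖ + ‖G Y * h Y‖ := norm_add₃_le
        _ = ‖F Y‖ * ‖G Y‖ + ‖F Y‖ * ‖h' Y‖ + ‖G Y‖ * ‖h Y‖ := by
            rw [norm_mul, norm_mul, norm_mul]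
        _ ≤ δ * δ + δ * M + δ * M := by
            refine add_le_add (add_le_add ?_ ?_) ?_
            · exact mul_le_mul hFY.le hGY.le (norm_nonneg _) hδpos.le
            · exact mul_le_mul hFY.le (hh'M Y) (norm_nonneg _) hδpos.le
            · exact mul_le_mul hGY.le (hhM Y) (norm_nonneg _) hδpos.le
    have tri := norm_sub_le_norm_sub_add_norm_sub (h y₀ * h' y₀) (h Y * h' Y) (1 : ℂ)
    have hMne : M ≠ 0 := ne_of_gt hMpos
    have c1 : M * (ε / (8 * M)) = ε / 8 := by field_simp
    have d2 : ε / (8 * M) ≤ ε / 8 := by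
      apply div_le_div_of_nonneg_left hε.le (by norm_num)
      linarith
    have d1 : δ * δ ≤ ε / 8 := by nlinarith
    have d3 : δ * M ≤ ε / 8 := by
      calc δ * M ≤ ε / (8 * M) * M := mul_le_mul_of_nonneg_right hδ2 hMpos.le
        _ = ε / 8 := by field_simp
    have hεM8 : ε / (8 * M) * M = ε / 8 := by field_simp
    have hε8 : ε / 8 * 5 < ε := by linarith
    have s1 : ‖h y₀ * h' y₀ - h Y * h' Y‖ ≤ ε / 8 + ε / 8 := by linarith
    have s2 : ‖h Y * h' Y - 1‖ ≤ ε / 8 + ε / 8 + ε / 8 := le_trans e2 (by linarith [d1, d3])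
    linarith
  have h0 : h y₀ * h' y₀ - 1 ≠ 0 → False := by
    intro hne
    exact lt_irrefl _ (key ‖h y₀ * h' y₀ - 1‖ (norm_pos_iff.2 hne))
  have : h y₀ * h' y₀ - 1 = 0 := by
    by_contra hne
    exact h0 hne
  exact sub_eq_zero.1 this
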